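/- For all natural numbers n ≥ 2, ∑_{i=2}^n ((4i−3)/(i(2i−1)))·∑_{j=2}^i (64j⁴−288j³+468j²−323j+84)/((j−1)·j·(2j−3)·(4j−7)·(4j−3)) = 2·(4H_n² + 4H_n + H_{2n}² + (−4H_n − 2)H_{2n} − H_{2n}^{(2)}). -/

import Mathlib

/-- The `m`-th harmonic number `H_m = ∑_{k=1}^m 1/k` in `ℚ`. -/
def H (n : ℕ) : ℚ := ∑ k ∈ Finset.Icc 1 n, (1 : ℚ) / k

/-- The generalized harmonic number of order `o`, `H_n^{(o)} = ∑_{k=1}^n 1/k^o` in `ℚ`. -/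
def Hgen (o n : ℕ) : ℚ := ∑ k ∈ Finset.Icc 1 n, (1 : ℚ) / (k : ℚ) ^ o

lemma H_succ (n : ℕ) : H (n + 1) = H n + 1 / (n + 1 : ℚ) := by
  unfold H
  rw [Finset.sum_Icc_succ_top (by omega)]
  push_cast; ring

lemma H_two_succ (n : ℕ) :
    H (2 * (n + 1)) = H (2 * n) + 1 / (2 * (n : ℚ) + 1) + 1 / (2 * (n : ℚ) + 2) := by
  have h : 2 * (n + 1) = (2 * n + 1) + 1 := by omega
  rw [h, H_succ, H_succ]
  push_cast; ring

lemma Hgen_two_succ (n : ℕ) :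
    Hgen 2 (2 * (n + 1)) = Hgen 2 (2 * n) + 1 / (2 * (n : ℚ) + 1) ^ 2
      + 1 / (2 * (n : ℚ) + 2) ^ 2 := by
  unfold Hgen
  have h1 : 2 * (n + 1) = (2 * n + 1) + 1 := by omega
  rw [h1, Finset.sum_Icc_succ_top (by omega), Finset.sum_Icc_succ_top (by omega)]
  push_cast; ring

lemma H_two_eval : H 2 = 3 / 2 := by
  unfold H
  rw [show (2:ℕ) = 1 + 1 from rfl, Finset.sum_Icc_succ_top (by omega)]
  norm_num

lemma H_four_eval : H 4 = 25 / 12 := by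
  unfold H
  rw [show (4:ℕ) = 1 + 1 + 1 + 1 from rfl, Finset.sum_Icc_succ_top (by omega),
    Finset.sum_Icc_succ_top (by omega), Finset.sum_Icc_succ_top (by omega)]
  norm_num

lemma Hgen_four_eval : Hgen 2 4 = 205 / 144 := by
  unfold Hgen
  rw [show (4:ℕ) = 1 + 1 + 1 + 1 from rfl, Finset.sum_Icc_succ_top (by omega),
    Finset.sum_Icc_succ_top (by omega), Finset.sum_Icc_succ_top (by omega)]
  norm_num

lemma frac_inner (x : ℚ) (h1 : x ≠ 0) (h2 : x + 1 ≠ 0) (h3 : 2*x-1 ≠ 0) (h4 : 2*x+1 ≠ 0)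
    (h5 : 2*x+2 ≠ 0) (h6 : 4*x-3 ≠ 0) (h7 : 4*x+1 ≠ 0) :
    (64*(x+1)^4 - 288*(x+1)^3 + 468*(x+1)^2 - 323*(x+1) + 84) /
      ((x+1-1)*(x+1)*(2*(x+1)-3)*(4*(x+1)-7)*(4*(x+1)-3))
    = 4/(x+1) - 2/(2*x+1) - 2/(2*x+2)
      + (-(5/(3*(x+1))) + 2/(2*(x+1)-1) - 10/(3*(4*(x+1)-3)))
      - (-(5/(3*x)) + 2/(2*x-1) - 10/(3*(4*x-3))) := by
  have e1 : x+1-1 = x := by ring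
  have e2 : 2*(x+1)-3 = 2*x-1 := by ring
  have e3 : 4*(x+1)-7 = 4*x-3 := by ring
  have e4 : 4*(x+1)-3 = 4*x+1 := by ring
  have e5 : 2*(x+1)-1 = 2*x+1 := by ring
  rw [e1, e2, e3, e4, e5]
  have h3' : x*2-1 ≠ 0 := by rw [mul_comm]; exact h3
  have h4' : x*2+1 ≠ 0 := by rw [mul_comm]; exact h4
  have h6' : x*4-3 ≠ 0 := by rw [mul_comm]; exact h6
  have h7' : x*4+1 ≠ 0 := by rw [mul_comm]; exact h7
  field_simp
  ring

lemma frac_outer (x h g s : ℚ) (h2 : x + 1 ≠ 0) (h4 : 2*x+1 ≠ 0) (h5 : 2*x+2 ≠ 0)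
    (h7 : 4*x+1 ≠ 0) :
    2*(4*h^2+4*h+g^2+(-4*h-2)*g-s)
      + ((4*(x+1)-3)/((x+1)*(2*(x+1)-1)))
        * (4*(h+1/(x+1)) - 2*(g+1/(2*x+1)+1/(2*x+2)) + 2
            - 5/(3*(x+1)) + 2/(2*(x+1)-1) - 10/(3*(4*(x+1)-3)))
    = 2*(4*(h+1/(x+1))^2 + 4*(h+1/(x+1)) + (g+1/(2*x+1)+1/(2*x+2))^2
        + (-4*(h+1/(x+1))-2)*(g+1/(2*x+1)+1/(2*x+2))
        - (s+1/(2*x+1)^2+1/(2*x+2)^2)) := by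
  have e4 : 4*(x+1)-3 = 4*x+1 := by ring
  have e5 : 2*(x+1)-1 = 2*x+1 := by ring
  rw [e4, e5]
  field_simp
  ring

lemma innerSumEq (i : ℕ) (hi : 2 ≤ i) :
    ∑ j ∈ Finset.Icc 2 i,
        (64 * (j : ℚ) ^ 4 - 288 * (j : ℚ) ^ 3 + 468 * (j : ℚ) ^ 2 - 323 * (j : ℚ) + 84) /
          (((j : ℚ) - 1) * (j : ℚ) * (2 * (j : ℚ) - 3) * (4 * (j : ℚ) - 7) * (4 * (j : ℚ) - 3))
      = 4 * H i - 2 * H (2 * i) + 2 - 5 / (3 * (i : ℚ)) + 2 / (2 * (i : ℚ) - 1)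
          - 10 / (3 * (4 * (i : ℚ) - 3)) := by
  induction i, hi using Nat.le_induction with
  | base =>
      rw [show (2:ℕ) = 1 + 1 from rfl, Finset.sum_Icc_succ_top (by omega)]
      rw [show (1:ℕ) + 1 = 2 from rfl, H_two_eval, show 2 * 2 = 4 from rfl, H_four_eval]
      simp
      norm_num
  | succ i hi ih =>
      rw [Finset.sum_Icc_succ_top (by omega), ih, H_succ, H_two_succ]
      have hx : (2 : ℚ) ≤ (i : ℚ) := by exact_mod_cast hi
      have h1 : (i : ℚ) ≠ 0 := by linarith
      have h2 : (i : ℚ) + 1 ≠ 0 := by linarith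
      have h3 : 2 * (i : ℚ) - 1 ≠ 0 := by linarith
      have h4 : 2 * (i : ℚ) + 1 ≠ 0 := by linarith
      have h5 : 2 * (i : ℚ) + 2 ≠ 0 := by linarith
      have h6 : 4 * (i : ℚ) - 3 ≠ 0 := by linarith
      have h7 : 4 * (i : ℚ) + 1 ≠ 0 := by linarith
      have key := frac_inner (i : ℚ) h1 h2 h3 h4 h5 h6 h7
      push_cast
      linear_combination key

theorem stmt5 (n : ℕ) (hn : 2 ≤ n) :
    ∑ i ∈ Finset.Icc 2 n, ((4 * (i : ℚ) - 3) / ((i : ℚ) * (2 * (i : ℚ) - 1))) *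
        ∑ j ∈ Finset.Icc 2 i,
          (64 * (j : ℚ) ^ 4 - 288 * (j : ℚ) ^ 3 + 468 * (j : ℚ) ^ 2 - 323 * (j : ℚ) + 84) /
            (((j : ℚ) - 1) * (j : ℚ) * (2 * (j : ℚ) - 3) * (4 * (j : ℚ) - 7) * (4 * (j : ℚ) - 3))
      = 2 * (4 * (H n) ^ 2 + 4 * H n + (H (2 * n)) ^ 2 + (-4 * H n - 2) * H (2 * n)
          - Hgen 2 (2 * n)) := by
  induction n, hn using Nat.le_induction with
  | base =>
      rw [show (2:ℕ) = 1 + 1 from rfl, Finset.sum_Icc_succ_top (by omega)]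
      rw [show (1:ℕ) + 1 = 2 from rfl, show 2 * 2 = 4 from rfl, H_two_eval, H_four_eval,
        Hgen_four_eval]
      simp
      norm_num
  | succ n hn ih =>
      rw [Finset.sum_Icc_succ_top (by omega), ih, innerSumEq (n + 1) (by omega),
        H_succ, H_two_succ, Hgen_two_succ]
      have hx : (2 : ℚ) ≤ (n : ℚ) := by exact_mod_cast hn
      have h2 : (n : ℚ) + 1 ≠ 0 := by linarith
      have h4 : 2 * (n : ℚ) + 1 ≠ 0 := by linarith
      have h5 : 2 * (n : ℚ) + 2 ≠ 0 := by linarith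
      have h7 : 4 * (n : ℚ) + 1 ≠ 0 := by linarith
      have key := frac_outer (n : ℚ) (H n) (H (2 * n)) (Hgen 2 (2 * n)) h2 h4 h5 h7
      push_cast
      linear_combination key
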